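/- arXiv:0712.3688 — 4 statements merged into one kernel-verified Lean document; each statement's English description precedes it below -/
import Mathlib

section
/- Let (X_n, d_n, μ_n), n ≥ 1, be nonempty compact metric spaces with Borel probability measures converging to (X, d, μ) in the Gromov–Hausdorff–Prokhorov distance, i.e. d_GHP((X_n,d_n,μ_n),(X,d,μ)) → 0. Let Y_n ⊆ X_n be ε_n-dense in X_n (every point of X_n lies within distance ε_n of Y_n) for some sequence ε_n → 0. If for every ε > 0 one has limsup_{n→∞} inf_{x ∈ Y_n} μ_n(B(x,ε)) > 0, where B(x,ε) is the open ball of radius ε around x, then μ has full support: supp μ = X, i.e. every nonempty open subset of X has positive μ-measure. -/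
open MeasureTheory Set

section GHP

variable {X Y : Type*}

/-- A "glue metric": a metric on the disjoint union `X ⊕ Y` whose restrictions to `X`
and `Y` coincide with the given metrics. -/
structure IsGlueMetric [MetricSpace X] [MetricSpace Y] (δ : X ⊕ Y → X ⊕ Y → ℝ) : Prop where
  refl : ∀ a, δ a a = 0
  pos : ∀ a b, a ≠ b → 0 < δ a b
  symm : ∀ a b, δ a b = δ b a
  triangle : ∀ a b c, δ a c ≤ δ a b + δ b c
  restr_left : ∀ x x' : X, δ (Sum.inl x) (Sum.inl x') = dist x x'
  restr_right : ∀ y y' : Y, δ (Sum.inr y) (Sum.inr y') = dist y y'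

/-- The Hausdorff distance, in `(X ⊕ Y, δ)`, between (the images of) `X` and `Y`:
the infimum of `ε > 0` such that each space is contained in the open `ε`-neighborhood
of the other. -/
noncomputable def glueHausdorffDist (δ : X ⊕ Y → X ⊕ Y → ℝ) : ℝ :=
  sInf {ε : ℝ | 0 < ε ∧ (∀ x : X, ∃ y : Y, δ (Sum.inl x) (Sum.inr y) < ε) ∧
    (∀ y : Y, ∃ x : X, δ (Sum.inl x) (Sum.inr y) < ε)}

/-- The Prokhorov distance, in `(X ⊕ Y, δ)`, between the pushforwards of `μ` and `ν`:
the infimum of `ε > 0` such that `μ(C) ≤ ν(C^ε) + ε` for every `δ`-closed set `C`,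
where `C^ε` is the open `ε`-neighborhood for `δ`. -/
noncomputable def glueProkhorovDist [MeasurableSpace X] [MeasurableSpace Y]
    (δ : X ⊕ Y → X ⊕ Y → ℝ) (μ : Measure X) (ν : Measure Y) : ℝ :=
  sInf {ε : ℝ | 0 < ε ∧ ∀ C : Set (X ⊕ Y),
    (∀ a ∉ C, ∃ η > 0, ∀ b ∈ C, η ≤ δ a b) →
    μ (Sum.inl ⁻¹' C) ≤ ν (Sum.inr ⁻¹' {a | ∃ b ∈ C, δ a b < ε}) + ENNReal.ofReal ε}

/-- The Gromov–Hausdorff–Prokhorov distance between two metric spaces equipped with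
Borel measures: the infimum, over all metrics `δ` on the disjoint union restricting to
the given metrics, of the maximum of the Hausdorff distance between the two spaces and
the Prokhorov distance between the pushforward measures. -/
noncomputable def ghpDist [MetricSpace X] [MetricSpace Y]
    [MeasurableSpace X] [MeasurableSpace Y] (μ : Measure X) (ν : Measure Y) : ℝ :=
  sInf {r : ℝ | ∃ δ : X ⊕ Y → X ⊕ Y → ℝ, IsGlueMetric δ ∧
    r = max (glueHausdorffDist δ) (glueProkhorovDist δ μ ν)}

end GHP

section Aux

open Metric Set MeasureTheory

lemma exists_lt_of_sInf_lt' {S : Set ℝ} {a : ℝ} (hne : S.Nonempty) (h : sInf S < a) :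
    ∃ b ∈ S, b < a := by
  by_contra h'
  push_neg at h'
  exact absurd (le_csInf hne h') (not_le.2 h)

lemma glue_nonneg {X Y : Type*} [MetricSpace X] [MetricSpace Y]
    {δ : X ⊕ Y → X ⊕ Y → ℝ} (hδ : IsGlueMetric δ) (a b : X ⊕ Y) : 0 ≤ δ a b := by
  have h1 := hδ.triangle a b a
  have h2 := hδ.symm a b
  have h3 := hδ.refl a
  linarith

lemma exists_glueMetric (X Y : Type*) [MetricSpace X] [MetricSpace Y]
    [Nonempty X] [Nonempty Y] : ∃ δ : X ⊕ Y → X ⊕ Y → ℝ, IsGlueMetric δ := by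
  obtain ⟨x0⟩ := ‹Nonempty X›
  obtain ⟨y0⟩ := ‹Nonempty Y›
  refine ⟨fun a b => match a, b with
    | .inl x, .inl x' => dist x x'
    | .inl x, .inr y => dist x x0 + 1 + dist y y0
    | .inr y, .inl x => dist x x0 + 1 + dist y y0
    | .inr y, .inr y' => dist y y', ?_, ?_, ?_, ?_, ?_, ?_⟩
  · rintro (x | y) <;> simp
  · rintro (x | y) (x' | y') h
    · exact dist_pos.2 (by simpa using h)
    · have := dist_nonneg (x := x) (y := x0)
      have := dist_nonneg (x := y') (y := y0)
      simp only; linarith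
    · have := dist_nonneg (x := x') (y := x0)
      have := dist_nonneg (x := y) (y := y0)
      simp only; linarith
    · exact dist_pos.2 (by simpa using h)
  · rintro (x | y) (x' | y') <;> simp [dist_comm]
  · rintro (a | a) (b | b) (c | c) <;> simp only
    · exact dist_triangle a b c
    · have := dist_triangle a b x0; linarith
    · have h1 := dist_triangle a x0 c
      have h2 := dist_comm x0 c
      have := dist_nonneg (x := b) (y := y0); linarith
    · have h1 := dist_triangle c b y0
      have h2 := dist_comm c b; linarith
    · have h1 := dist_triangle c b x0
      have h2 := dist_comm c b; linarith
    · have h1 := dist_triangle a y0 c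
      have h2 := dist_comm y0 c
      have := dist_nonneg (x := b) (y := x0); linarith
    · have := dist_triangle a b y0; linarith
    · exact dist_triangle a b c
  · intro x x'; rfl
  · intro y y'; rfl

/-- The set defining the glue Hausdorff distance is nonempty for compact spaces. -/
lemma glueHausdorff_set_nonempty {X Y : Type*} [MetricSpace X] [MetricSpace Y]
    [CompactSpace X] [CompactSpace Y] [Nonempty X] [Nonempty Y]
    {δ : X ⊕ Y → X ⊕ Y → ℝ} (hδ : IsGlueMetric δ) :
    {ε : ℝ | 0 < ε ∧ (∀ x : X, ∃ y : Y, δ (Sum.inl x) (Sum.inr y) < ε) ∧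
      (∀ y : Y, ∃ x : X, δ (Sum.inl x) (Sum.inr y) < ε)}.Nonempty := by
  obtain ⟨x0⟩ := ‹Nonempty X›
  obtain ⟨y0⟩ := ‹Nonempty Y›
  obtain ⟨CX, hCX⟩ := Metric.isBounded_iff.1 (isCompact_univ (X := X)).isBounded
  obtain ⟨CY, hCY⟩ := Metric.isBounded_iff.1 (isCompact_univ (X := Y)).isBounded
  have hCX0 : 0 ≤ CX := le_trans (by simp) (hCX (Set.mem_univ x0) (Set.mem_univ x0))
  have hCY0 : 0 ≤ CY := le_trans (by simp) (hCY (Set.mem_univ y0) (Set.mem_univ y0))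
  set D := δ (Sum.inl x0) (Sum.inr y0) with hD
  have hD0 : 0 ≤ D := glue_nonneg hδ _ _
  refine ⟨CX + CY + D + 1, by linarith, fun x => ⟨y0, ?_⟩, fun y => ⟨x0, ?_⟩⟩
  · have h1 := hδ.triangle (Sum.inl x) (Sum.inl x0) (Sum.inr y0)
    have h2 := hδ.restr_left x x0
    have h3 := hCX (Set.mem_univ x) (Set.mem_univ x0)
    linarith
  · have h1 := hδ.triangle (Sum.inl x0) (Sum.inr y0) (Sum.inr y)
    have h2 := hδ.restr_right y0 y
    have h3 := hCY (Set.mem_univ y0) (Set.mem_univ y)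
    linarith

lemma glueProkhorov_set_nonempty {X Y : Type*} [MetricSpace X] [MetricSpace Y]
    [MeasurableSpace X] [MeasurableSpace Y]
    {δ : X ⊕ Y → X ⊕ Y → ℝ} (μ : Measure X) (ν : Measure Y) [IsProbabilityMeasure μ] :
    {ε : ℝ | 0 < ε ∧ ∀ C : Set (X ⊕ Y),
      (∀ a ∉ C, ∃ η > 0, ∀ b ∈ C, η ≤ δ a b) →
      μ (Sum.inl ⁻¹' C) ≤ ν (Sum.inr ⁻¹' {a | ∃ b ∈ C, δ a b < ε}) + ENNReal.ofReal ε}.Nonempty := by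
  refine ⟨2, by norm_num, fun C _ => ?_⟩
  calc μ (Sum.inl ⁻¹' C) ≤ 1 := prob_le_one
    _ ≤ ENNReal.ofReal 2 := ENNReal.one_le_ofReal.2 (by norm_num)
    _ ≤ _ := le_add_self

end Aux


open Filter

/-- If compact metric measure spaces `(X_n, d_n, μ_n)` converge to `(Y, d, ν)` in the
Gromov–Hausdorff–Prokhorov distance, `Y_n ⊆ X_n` is `ε_n`-dense with `ε_n → 0`, and for
every `ε > 0` the masses of `ε`-balls centered on `Y_n` are bounded below along a
subsequence (`limsup_n inf_{x ∈ Y_n} μ_n(B(x,ε)) > 0`), then `ν` has full support. -/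
theorem limit_measure_full_support
    (X : ℕ → Type*) [∀ n, MetricSpace (X n)] [∀ n, CompactSpace (X n)]
    [∀ n, Nonempty (X n)] [∀ n, MeasurableSpace (X n)] [∀ n, BorelSpace (X n)]
    (μ : ∀ n, Measure (X n)) [∀ n, IsProbabilityMeasure (μ n)]
    (Y : Type*) [MetricSpace Y] [CompactSpace Y] [Nonempty Y]
    [MeasurableSpace Y] [BorelSpace Y]
    (ν : Measure Y) [IsProbabilityMeasure ν]
    (hconv : Tendsto (fun n => ghpDist (μ n) ν) atTop (nhds 0))
    (Yn : ∀ n, Set (X n)) (εn : ℕ → ℝ) (hεn : Tendsto εn atTop (nhds 0))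
    (hdense : ∀ n, ∀ x : X n, ∃ y ∈ Yn n, dist x y ≤ εn n)
    (hmass : ∀ ε : ℝ, 0 < ε →
      0 < limsup (fun n => ⨅ x ∈ Yn n, μ n (Metric.ball x ε)) atTop) :
    ∀ U : Set Y, IsOpen U → U.Nonempty → 0 < ν U := by
  intro U hU hUne
  obtain ⟨y0, hy0⟩ := hUne
  obtain ⟨r, hr, hball⟩ := Metric.isOpen_iff.1 hU y0 hy0
  -- positive mass along a subsequence
  have hL := hmass (r / 2) (by positivity)
  obtain ⟨c, hc0, hcL⟩ := exists_between hL
  set c' : ENNReal := min c 1 with hc'def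
  have hc'0 : 0 < c' := lt_min hc0 one_pos
  have hc'top : c' ≠ ⊤ := ne_top_of_le_ne_top ENNReal.one_ne_top (min_le_right _ _)
  have hc't : 0 < c'.toReal := ENNReal.toReal_pos hc'0.ne' hc'top
  set η : ℝ := min (r / 8) (c'.toReal / 2) with hηdef
  have hη0 : 0 < η := lt_min (by positivity) (by positivity)
  have hηr : η ≤ r / 8 := min_le_left _ _
  have hηc : ENNReal.ofReal η < c' := by
    have h1 : η < c'.toReal := lt_of_le_of_lt (min_le_right _ _) (by linarith)
    exact (ENNReal.ofReal_lt_iff_lt_toReal hη0.le hc'top).2 h1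
  have hηc' : ENNReal.ofReal η < c := lt_of_lt_of_le hηc (min_le_left _ _)
  -- choose a good index n
  have hfreq : ∃ᶠ n in atTop, c < ⨅ x ∈ Yn n, μ n (Metric.ball x (r / 2)) :=
    Filter.frequently_lt_of_lt_limsup (by isBoundedDefault) hcL
  have hev1 : ∀ᶠ n in atTop, ghpDist (μ n) ν < η := hconv.eventually (gt_mem_nhds hη0)
  have hev2 : ∀ᶠ n in atTop, εn n < r / 8 :=
    hεn.eventually (gt_mem_nhds (by positivity))
  obtain ⟨n, hcn, hghp, hεnn⟩ := (hfreq.and_eventually (hev1.and hev2)).exists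
  -- extract a glue metric with small Hausdorff and Prokhorov distances
  obtain ⟨δ0, hδ0⟩ := exists_glueMetric (X n) Y
  have hSne : {s : ℝ | ∃ δ : X n ⊕ Y → X n ⊕ Y → ℝ, IsGlueMetric δ ∧
      s = max (glueHausdorffDist δ) (glueProkhorovDist δ (μ n) ν)}.Nonempty :=
    ⟨_, δ0, hδ0, rfl⟩
  obtain ⟨s, ⟨δ, hδ, hs⟩, hsη⟩ := exists_lt_of_sInf_lt' hSne hghp
  have hH : glueHausdorffDist δ < η := lt_of_le_of_lt (hs ▸ le_max_left _ _) hsη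
  have hP : glueProkhorovDist δ (μ n) ν < η := lt_of_le_of_lt (hs ▸ le_max_right _ _) hsη
  obtain ⟨εH, ⟨hεH0, hεHx, hεHy⟩, hεHη⟩ :=
    exists_lt_of_sInf_lt' (glueHausdorff_set_nonempty hδ) hH
  obtain ⟨εP, ⟨hεP0, hεPC⟩, hεPη⟩ :=
    exists_lt_of_sInf_lt' (glueProkhorov_set_nonempty (δ := δ) (μ n) ν) hP
  -- find a point of `Yn n` close to `y0`
  obtain ⟨x, hx⟩ := hεHy y0
  obtain ⟨x', hx'Y, hx'd⟩ := hdense n x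
  -- the key closed set
  set K : Set (X n) := Metric.closedBall x' (r / 2) with hKdef
  set C : Set (X n ⊕ Y) := Sum.inl '' K with hCdef
  have hCclosed : ∀ a ∉ C, ∃ η' > 0, ∀ b ∈ C, η' ≤ δ a b := by
    rintro (z | w) ha
    · have hz : z ∉ K := fun h => ha ⟨z, h, rfl⟩
      rw [hKdef, Metric.mem_closedBall, not_le] at hz
      refine ⟨dist z x' - r / 2, by linarith, ?_⟩
      rintro b ⟨z', hz', rfl⟩
      rw [hδ.restr_left]
      have := dist_triangle z z' x'
      rw [Metric.mem_closedBall] at hz'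
      linarith
    · have hKc : IsCompact K := Metric.isClosed_closedBall.isCompact
      have hKne : K.Nonempty := ⟨x', Metric.mem_closedBall_self (by positivity)⟩
      have hlip : LipschitzWith 1 (fun z => δ (Sum.inr w) (Sum.inl z)) := by
        apply LipschitzWith.of_dist_le_mul
        intro z z'
        rw [Real.dist_eq, NNReal.coe_one, one_mul, abs_sub_le_iff]
        constructor
        · have h1 := hδ.triangle (Sum.inr w) (Sum.inl z') (Sum.inl z)
          rw [hδ.restr_left, dist_comm z'] at h1
          linarith
        · have h1 := hδ.triangle (Sum.inr w) (Sum.inl z) (Sum.inl z')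
          rw [hδ.restr_left] at h1
          linarith
      obtain ⟨zm, hzm, hzmin⟩ := hKc.exists_isMinOn hKne hlip.continuous.continuousOn
      refine ⟨δ (Sum.inr w) (Sum.inl zm), hδ.pos _ _ (by simp), ?_⟩
      rintro b ⟨z', hz', rfl⟩
      exact hzmin hz'
  have hkey := hεPC C hCclosed
  rw [hCdef, Set.preimage_image_eq K Sum.inl_injective] at hkey
  -- the enlarged set lies inside `U`
  have hsub : Sum.inr ⁻¹' {a | ∃ b ∈ C, δ a b < εP} ⊆ U := by
    intro w hw
    obtain ⟨b, hbC, hbd⟩ := hw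
    obtain ⟨z, hzK, rfl⟩ := hbC
    apply hball
    rw [Metric.mem_ball, dist_comm]
    have h1 := hδ.triangle (Sum.inr y0) (Sum.inl x) (Sum.inr w)
    have h2 := hδ.triangle (Sum.inl x) (Sum.inl x') (Sum.inr w)
    have h3 := hδ.triangle (Sum.inl x') (Sum.inl z) (Sum.inr w)
    rw [hδ.restr_left] at h2 h3
    rw [hδ.restr_right] at h1
    have h4 : δ (Sum.inr y0) (Sum.inl x) < εH := by
      rw [hδ.symm]; exact hx
    have h5 : δ (Sum.inl z) (Sum.inr w) < εP := by
      rw [hδ.symm]; exact hbd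
    rw [Metric.mem_closedBall, dist_comm] at hzK
    linarith
  -- put everything together
  have hchain : c < ν U + ENNReal.ofReal εP := by
    calc c < ⨅ x ∈ Yn n, μ n (Metric.ball x (r / 2)) := hcn
      _ ≤ μ n (Metric.ball x' (r / 2)) := iInf₂_le x' hx'Y
      _ ≤ μ n K := measure_mono Metric.ball_subset_closedBall
      _ ≤ ν (Sum.inr ⁻¹' {a | ∃ b ∈ C, δ a b < εP}) + ENNReal.ofReal εP := hkey
      _ ≤ ν U + ENNReal.ofReal εP := add_le_add_left (measure_mono hsub) _
  by_contra hνU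
  have hν0 : ν U = 0 := le_zero_iff.1 (not_lt.1 hνU)
  rw [hν0, zero_add] at hchain
  exact absurd (lt_trans hchain (lt_of_le_of_lt (ENNReal.ofReal_le_ofReal hεPη.le) hηc'))
    (lt_irrefl c)
end

section
/- Let (X_n, d_n) be nonempty compact geodesic metric spaces with marked points x_n, y_n ∈ X_n, and let (X, d) be a nonempty compact geodesic metric space with marked points x, y ∈ X, d(x,y) > 0. Suppose there exist compact correspondences ℛ_n between X_n and X with (x_n, x) ∈ ℛ_n, (y_n, y) ∈ ℛ_n and dis ℛ_n → 0. Let D_n ∈ (−d_n(x_n,y_n), d_n(x_n,y_n)) converge to D ∈ (−d(x,y), d(x,y)). Assume that for every ε > 0 there exists δ > 0 such that limsup_{n→∞} diam(medqg^{D_n,δ}_{x_n y_n}(X_n)) < ε. Then there exists exactly one point z ∈ X with d(x,z) − d(y,z) = D that lies on some geodesic from x to y. -/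
open Filter

section Geodesic

variable {Z : Type*} [MetricSpace Z]

/-- `γ` is a geodesic from `x` to `y`: an isometric path `[0, d(x,y)] → Z` from `x`
to `y`. -/
def IsGeodesicFromTo (γ : ℝ → Z) (x y : Z) : Prop :=
  γ 0 = x ∧ γ (dist x y) = y ∧
    ∀ s ∈ Set.Icc (0 : ℝ) (dist x y), ∀ t ∈ Set.Icc (0 : ℝ) (dist x y),
      dist (γ s) (γ t) = |s - t|

/-- A geodesic metric space: any two points are joined by a geodesic. -/
def IsGeodesicSpace (Z : Type*) [MetricSpace Z] : Prop :=
  ∀ x y : Z, ∃ γ : ℝ → Z, IsGeodesicFromTo γ x y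

/-- The set `medqg^{D,δ}_{xy}`: points `z` with `d(x,z) − d(y,z) = D` lying on a
`δ`-quasi geodesic from `x` to `y` (`d(x,z) + d(y,z) ≤ d(x,y) + δ`). -/
def medqg (x y : Z) (D δ : ℝ) : Set Z :=
  {z : Z | dist x z - dist y z = D ∧ dist x z + dist y z ≤ dist x y + δ}

end Geodesic

section Corr

variable {X Y : Type*}

/-- A correspondence between `X` and `Y`. -/
def IsCorrespondence (R : Set (X × Y)) : Prop :=
  (∀ x : X, ∃ y : Y, (x, y) ∈ R) ∧ (∀ y : Y, ∃ x : X, (x, y) ∈ R)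

/-- The distortion of a correspondence. -/
noncomputable def distortion [MetricSpace X] [MetricSpace Y] (R : Set (X × Y)) : ℝ :=
  sSup {r : ℝ | ∃ p ∈ R, ∃ q ∈ R, r = |dist p.1 q.1 - dist p.2 q.2|}

end Corr

lemma geo_dist_left {Z : Type*} [MetricSpace Z] {γ : ℝ → Z} {x y : Z}
    (h : IsGeodesicFromTo γ x y) {s : ℝ} (hs : s ∈ Set.Icc (0:ℝ) (dist x y)) :
    dist x (γ s) = s := by
  have h0 : (0:ℝ) ∈ Set.Icc (0:ℝ) (dist x y) := ⟨le_rfl, dist_nonneg⟩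
  have := h.2.2 0 h0 s hs
  rw [h.1] at this
  rw [this, zero_sub, abs_neg, abs_of_nonneg hs.1]

lemma geo_dist_right {Z : Type*} [MetricSpace Z] {γ : ℝ → Z} {x y : Z}
    (h : IsGeodesicFromTo γ x y) {s : ℝ} (hs : s ∈ Set.Icc (0:ℝ) (dist x y)) :
    dist y (γ s) = dist x y - s := by
  have h1 : dist x y ∈ Set.Icc (0:ℝ) (dist x y) := ⟨dist_nonneg, le_rfl⟩
  have := h.2.2 (dist x y) h1 s hs
  rw [h.2.1] at this
  rw [this, abs_of_nonneg (by linarith [hs.2])]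

lemma abs_dist_sub_le_distortion {X Y : Type*} [MetricSpace X] [MetricSpace Y]
    [CompactSpace X] [CompactSpace Y] {R : Set (X × Y)} {p q : X × Y}
    (hp : p ∈ R) (hq : q ∈ R) :
    |dist p.1 q.1 - dist p.2 q.2| ≤ distortion R := by
  apply le_csSup
  · refine ⟨Metric.diam (Set.univ : Set X) + Metric.diam (Set.univ : Set Y), ?_⟩
    rintro r ⟨p, hp, q, hq, rfl⟩
    have h1 : dist p.1 q.1 ≤ Metric.diam (Set.univ : Set X) :=
      Metric.dist_le_diam_of_mem isCompact_univ.isBounded (Set.mem_univ _) (Set.mem_univ _)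
    have h2 : dist p.2 q.2 ≤ Metric.diam (Set.univ : Set Y) :=
      Metric.dist_le_diam_of_mem isCompact_univ.isBounded (Set.mem_univ _) (Set.mem_univ _)
    have := dist_nonneg (x := p.1) (y := q.1)
    have := dist_nonneg (x := p.2) (y := q.2)
    rw [abs_le]
    constructor <;> linarith
  · exact ⟨p, hp, q, hq, rfl⟩

/-- If marked compact geodesic spaces `(X_n, x_n, y_n)` converge to `(Y, x, y)` via
compact correspondences of vanishing distortion, `D_n → D` with
`D_n ∈ (−d(x_n,y_n), d(x_n,y_n))`, `D ∈ (−d(x,y), d(x,y))`, and for every `ε > 0` there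
is `δ > 0` such that eventually `diam(medqg^{D_n,δ}_{x_n y_n}(X_n)) < ε`, then there is
exactly one `D`-median point between `x` and `y` lying on some geodesic from `x`
to `y`. -/
theorem unique_median_point_on_geodesic
    (X : ℕ → Type*) [∀ n, MetricSpace (X n)] [∀ n, CompactSpace (X n)]
    [∀ n, Nonempty (X n)]
    (Y : Type*) [MetricSpace Y] [CompactSpace Y] [Nonempty Y]
    (hXgeo : ∀ n, IsGeodesicSpace (X n)) (hYgeo : IsGeodesicSpace Y)
    (xn yn : ∀ n, X n) (x y : Y) (hxy : 0 < dist x y)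
    (R : ∀ n, Set (X n × Y)) (hRc : ∀ n, IsCompact (R n))
    (hRcorr : ∀ n, IsCorrespondence (R n))
    (hx : ∀ n, (xn n, x) ∈ R n) (hy : ∀ n, (yn n, y) ∈ R n)
    (hdis : Tendsto (fun n => distortion (R n)) atTop (nhds 0))
    (Dn : ℕ → ℝ) (hDn : ∀ n, Dn n ∈ Set.Ioo (-(dist (xn n) (yn n))) (dist (xn n) (yn n)))
    (D : ℝ) (hD : D ∈ Set.Ioo (-(dist x y)) (dist x y))
    (hDconv : Tendsto Dn atTop (nhds D))
    (hmed : ∀ ε : ℝ, 0 < ε → ∃ δ : ℝ, 0 < δ ∧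
      ∀ᶠ n in atTop, Metric.diam (medqg (xn n) (yn n) (Dn n) δ) < ε) :
    ∃! z : Y, (dist x z - dist y z = D) ∧
      ∃ γ : ℝ → Y, IsGeodesicFromTo γ x y ∧ ∃ t ∈ Set.Icc (0 : ℝ) (dist x y), γ t = z := by
  classical
  have hD1 : -(dist x y) < D := hD.1
  have hD2 : D < dist x y := hD.2
  set d : ℝ := dist x y with hd
  set t : ℝ := (d + D) / 2 with htdef
  have ht0 : 0 < t := by rw [htdef]; linarith
  have htd : t < d := by rw [htdef]; linarith
  have htI : t ∈ Set.Icc (0:ℝ) d := ⟨ht0.le, htd.le⟩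
  -- main quantitative step: any two `t`-points of geodesics are at distance ≤ ε
  have main : ∀ z z' : Y,
      (∃ γ : ℝ → Y, IsGeodesicFromTo γ x y ∧ γ t = z) →
      (∃ γ : ℝ → Y, IsGeodesicFromTo γ x y ∧ γ t = z') →
      ∀ ε : ℝ, 0 < ε → dist z z' ≤ ε := by
    intro z z' hz hz' ε hε
    obtain ⟨δ, hδ, hev⟩ := hmed (ε / 2) (by linarith)
    set m : ℝ := min t (d - t) with hmdef
    have hm : 0 < m := lt_min ht0 (by linarith)
    set θ : ℝ := min (min (m / 3) (δ / 11)) (ε / 46) with hθdef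
    have hθ : 0 < θ := by
      apply lt_min (lt_min (by linarith) (by linarith)) (by linarith)
    have hθm : θ ≤ m / 3 := le_trans (min_le_left _ _) (min_le_left _ _)
    have hθδ : θ ≤ δ / 11 := le_trans (min_le_left _ _) (min_le_right _ _)
    have hθε : θ ≤ ε / 46 := min_le_right _ _
    have h1 : ∀ᶠ n in atTop, distortion (R n) < θ := hdis.eventually_lt_const hθ
    have h2 : ∀ᶠ n in atTop, |Dn n - D| < θ := by
      have : Tendsto (fun n => |Dn n - D|) atTop (nhds 0) := by
        have := (hDconv.sub_const D).abs
        simpa using this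
      exact this.eventually_lt_const hθ
    obtain ⟨n, ⟨hn1, hn2⟩, hn3⟩ := ((h1.and h2).and hev).exists
    set dis : ℝ := distortion (R n) with hdisdef
    set e : ℝ := |Dn n - D| with hedef
    set η : ℝ := 2 * dis + e with hηdef
    have hdis0 : 0 ≤ dis := by
      have := abs_dist_sub_le_distortion (hx n) (hx n)
      simpa using this
    have he0 : 0 ≤ e := abs_nonneg _
    have hdisθ : dis ≤ θ := hn1.le
    have heθ : e ≤ θ := hn2.le
    have hη0 : 0 ≤ η := by rw [hηdef]; linarith
    have hηm : η ≤ m := by rw [hηdef]; linarith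
    have hηt : η ≤ t := le_trans hηm (min_le_left _ _)
    have hηdt : η ≤ d - t := le_trans hηm (min_le_right _ _)
    have hDe := abs_le.mp (le_of_eq hedef.symm)
    have hDtd : D = 2 * t - d := by rw [htdef]; ring
    have hAxy' : |dist (xn n) (yn n) - dist x y| ≤ dis :=
      abs_dist_sub_le_distortion (hx n) (hy n)
    have hAxy := abs_le.mp hAxy'
    -- construction of an exact median point in `X n` near the correspondent of `z`
    have build : ∀ z : Y, (∃ γ : ℝ → Y, IsGeodesicFromTo γ x y ∧ γ t = z) →
        ∃ u w : X n, u ∈ medqg (xn n) (yn n) (Dn n) δ ∧ (w, z) ∈ R n ∧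
          dist u w ≤ 3 * η + 2 * dis := by
      rintro z ⟨γ, hγ, rfl⟩
      have hIm : t - η ∈ Set.Icc (0:ℝ) d := ⟨by linarith, by linarith⟩
      have hIp : t + η ∈ Set.Icc (0:ℝ) d := ⟨by linarith, by linarith⟩
      obtain ⟨w, hwR⟩ := (hRcorr n).2 (γ t)
      obtain ⟨a, haR⟩ := (hRcorr n).2 (γ (t - η))
      obtain ⟨b, hbR⟩ := (hRcorr n).2 (γ (t + η))
      have gm : dist x (γ (t - η)) = t - η := geo_dist_left hγ hIm
      have gm' : dist y (γ (t - η)) = d - (t - η) := geo_dist_right hγ hIm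
      have gp : dist x (γ (t + η)) = t + η := geo_dist_left hγ hIp
      have gp' : dist y (γ (t + η)) = d - (t + η) := geo_dist_right hγ hIp
      have gmm : dist (γ (t - η)) (γ (t + η)) = 2 * η := by
        rw [hγ.2.2 _ hIm _ hIp]
        rw [show t - η - (t + η) = -(2 * η) by ring, abs_neg, abs_of_nonneg (by linarith)]
      have gmt : dist (γ (t - η)) (γ t) = η := by
        rw [hγ.2.2 _ hIm _ htI]
        rw [show t - η - t = -η by ring, abs_neg, abs_of_nonneg hη0]
      have Axa' : |dist (xn n) a - dist x (γ (t - η))| ≤ dis :=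
        abs_dist_sub_le_distortion (hx n) haR
      rw [gm] at Axa'
      have Axa := abs_le.mp Axa'
      have Aya' : |dist (yn n) a - dist y (γ (t - η))| ≤ dis :=
        abs_dist_sub_le_distortion (hy n) haR
      rw [gm'] at Aya'
      have Aya := abs_le.mp Aya'
      have Axb' : |dist (xn n) b - dist x (γ (t + η))| ≤ dis :=
        abs_dist_sub_le_distortion (hx n) hbR
      rw [gp] at Axb'
      have Axb := abs_le.mp Axb'
      have Ayb' : |dist (yn n) b - dist y (γ (t + η))| ≤ dis :=
        abs_dist_sub_le_distortion (hy n) hbR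
      rw [gp'] at Ayb'
      have Ayb := abs_le.mp Ayb'
      have Aab' : |dist a b - dist (γ (t - η)) (γ (t + η))| ≤ dis :=
        abs_dist_sub_le_distortion haR hbR
      rw [gmm] at Aab'
      have Aab := abs_le.mp Aab'
      have Aaw' : |dist a w - dist (γ (t - η)) (γ t)| ≤ dis :=
        abs_dist_sub_le_distortion haR hwR
      rw [gmt] at Aaw'
      have Aaw := abs_le.mp Aaw'
      obtain ⟨c, hc⟩ := hXgeo n a b
      have hL0 : (0:ℝ) ≤ dist a b := dist_nonneg
      have hlip : LipschitzOnWith 1 c (Set.Icc 0 (dist a b)) := by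
        apply LipschitzOnWith.of_dist_le_mul
        intro s hs s' hs'
        rw [hc.2.2 s hs s' hs', Real.dist_eq]
        simp
      have hcont : ContinuousOn (fun s => dist (xn n) (c s) - dist (yn n) (c s))
          (Set.Icc 0 (dist a b)) := by
        exact ((continuous_const.dist continuous_id).comp_continuousOn hlip.continuousOn).sub
          ((continuous_const.dist continuous_id).comp_continuousOn hlip.continuousOn)
      have hmem : Dn n ∈ Set.Icc (dist (xn n) (c 0) - dist (yn n) (c 0))
          (dist (xn n) (c (dist a b)) - dist (yn n) (c (dist a b))) := by
        rw [hc.1, hc.2.1]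
        constructor
        · linarith [Axa.2, Aya.1, hDe.1, hDtd, hηdef]
        · linarith [Axb.1, Ayb.2, hDe.2, hDtd, hηdef]
      obtain ⟨s₀, hs₀I, hgs₀⟩ := intermediate_value_Icc hL0 hcont hmem
      set u : X n := c s₀ with hudef
      have hau : dist a u = s₀ := by
        have h00 : (0:ℝ) ∈ Set.Icc (0:ℝ) (dist a b) := ⟨le_rfl, hL0⟩
        have := hc.2.2 0 h00 s₀ hs₀I
        rw [hc.1] at this
        rw [hudef, this, zero_sub, abs_neg, abs_of_nonneg hs₀I.1]
      have hub : dist u b = dist a b - s₀ := by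
        have hLL : dist a b ∈ Set.Icc (0:ℝ) (dist a b) := ⟨hL0, le_rfl⟩
        have := hc.2.2 s₀ hs₀I (dist a b) hLL
        rw [hc.2.1] at this
        rw [hudef, this, abs_of_nonpos (by linarith [hs₀I.2]), neg_sub]
      have hLle : dist a b ≤ 2 * η + dis := by linarith [Aab.2]
      refine ⟨u, w, ⟨hgs₀, ?_⟩, hwR, ?_⟩
      · -- quasi-geodesic bound
        have t1 : dist (xn n) u ≤ dist (xn n) a + dist a u := dist_triangle _ _ _
        have t2 : dist (yn n) u ≤ dist (yn n) b + dist b u := dist_triangle _ _ _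
        rw [dist_comm b u] at t2
        have hθδ' : 11 * θ ≤ δ := by linarith
        linarith [Axa.2, Ayb.2, hAxy.1, hs₀I.1, hs₀I.2, hau, hub, hηdef]
      · have t3 : dist u w ≤ dist u a + dist a w := dist_triangle _ _ _
        rw [dist_comm u a] at t3
        linarith [Aaw.2, hs₀I.2, hau]
    obtain ⟨u, w, hu, hwR, huw⟩ := build z hz
    obtain ⟨u', w', hu', hw'R, hu'w'⟩ := build z' hz'
    have hww' : |dist w w' - dist z z'| ≤ dis := abs_dist_sub_le_distortion hwR hw'R
    have hww := abs_le.mp hww'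
    have hbdd : Bornology.IsBounded (medqg (xn n) (yn n) (Dn n) δ) :=
      isCompact_univ.isBounded.subset (Set.subset_univ _)
    have huu : dist u u' ≤ Metric.diam (medqg (xn n) (yn n) (Dn n) δ) :=
      Metric.dist_le_diam_of_mem hbdd hu hu'
    have t4 : dist w w' ≤ dist w u + dist u u' + dist u' w' := dist_triangle4 _ _ _ _
    rw [dist_comm w u] at t4
    have hηθ : η ≤ 3 * θ := by rw [hηdef]; linarith
    have hθε' : 46 * θ ≤ ε := by linarith
    linarith [hww.1, hn3]
  -- existence
  obtain ⟨γ₀, hγ₀⟩ := hYgeo x y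
  have hmed₀ : dist x (γ₀ t) - dist y (γ₀ t) = D := by
    rw [geo_dist_left hγ₀ htI, geo_dist_right hγ₀ htI, htdef]
    ring
  refine ⟨γ₀ t, ⟨hmed₀, γ₀, hγ₀, t, htI, rfl⟩, ?_⟩
  rintro z' ⟨hmz', γ', hγ', s', hs', rfl⟩
  have hxs : dist x (γ' s') = s' := geo_dist_left hγ' hs'
  have hys : dist y (γ' s') = d - s' := geo_dist_right hγ' hs'
  have hst : s' = t := by
    rw [hxs, hys] at hmz'
    rw [htdef]; linarith
  subst hst
  have h0 := main (γ' t) (γ₀ t) ⟨γ', hγ', rfl⟩ ⟨γ₀, hγ₀, rfl⟩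
  have : dist (γ' t) (γ₀ t) ≤ 0 :=
    le_of_forall_pos_le_add (fun ε hε => by simpa using h0 ε hε)
  exact dist_le_zero.mp this
end

section
/- Let α > 0 and let f(z) = Σ_{n≥0} h_n z^n be a power series with nonnegative real coefficients satisfying h_n ~ n^{α−1}/Γ(α) as n → ∞ (i.e. h_n Γ(α) n^{1−α} → 1). Then for every φ ∈ (π/2, π), one has (1−z)^α f(z) → 1 as z → 1 with z ranging over the domain D_{1,φ} = {z ∈ ℂ : |z| < 1 and |arg(z−1)| > φ}, where the argument is taken in (−π, π] and (1−z)^α is the principal branch; in other words, f(z) ~ (1−z)^{−α} as z → 1 inside D_{1,φ}. -/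
open Filter Complex

noncomputable def bc (α : ℝ) : ℕ → ℝ
  | 0 => 1
  | n + 1 => bc α n * (α + n) / (n + 1)

lemma bc_pos {α : ℝ} (hα : 0 < α) : ∀ n, 0 < bc α n := by
  intro n
  induction n with
  | zero => norm_num [bc]
  | succ n ih =>
      have h1 : (0:ℝ) < α + n := by positivity
      have h2 : (0:ℝ) < (n:ℝ) + 1 := by positivity
      simp only [bc]
      positivity

lemma bc_succ (α : ℝ) (n : ℕ) : bc α (n + 1) * (n + 1) = bc α n * (α + n) := by
  have h2 : ((n:ℝ)) + 1 ≠ 0 := by positivity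
  rw [show bc α (n+1) = bc α n * (α + n) / (n + 1) from rfl, div_mul_cancel₀ _ h2]

lemma bc_succ_eq {α : ℝ} (n : ℕ) : bc α (n + 1) = bc α n * (α + n) / (n + 1) := rfl

/-- summability of `(n+1) * bc (n+1) * r^n` for `0 ≤ r < 1`, hence of everything we need. -/
lemma summable_deriv_aux {α : ℝ} (hα : 0 < α) {r : ℝ} (hr0 : 0 < r) (hr : r < 1) :
    Summable (fun n : ℕ => ((n:ℝ)+1) * bc α (n+1) * r^n) := by
  apply summable_of_ratio_test_tendsto_lt_one hr
  · filter_upwards with n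
    have := bc_pos hα (n+1)
    positivity
  · set f : ℕ → ℝ := fun n => ((n:ℝ)+1) * bc α (n+1) * r^n with hf
    have key : ∀ n : ℕ, ‖f (n+1)‖ / ‖f n‖ = (α + ((n:ℝ)+1)) / ((n:ℝ)+1) * r := by
      intro n
      have hb1 := bc_pos hα (n+1)
      have hb2 := bc_pos hα (n+2)
      have hαn : (0:ℝ) < α + ((n:ℝ)+1) := by positivity
      have e1 : ‖f (n+1)‖ = ((n:ℝ)+2) * bc α (n+2) * r^(n+1) := by
        simp only [hf]
        rw [Real.norm_eq_abs, abs_of_pos (by push_cast; positivity)]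
        push_cast; ring_nf
      have e2 : ‖f n‖ = ((n:ℝ)+1) * bc α (n+1) * r^n := by
        simp only [hf]
        rw [Real.norm_eq_abs, abs_of_pos (by positivity)]
      rw [e1, e2]
      have hrec : ((n:ℝ)+2) * bc α (n+2) = bc α (n+1) * (α + ((n:ℝ)+1)) := by
        have := bc_succ α (n+1)
        push_cast at this ⊢
        linarith [this]
      rw [div_eq_iff (by positivity), pow_succ, hrec]
      field_simp
    have h1 : Tendsto (fun n : ℕ => (α + ((n:ℝ)+1)) / ((n:ℝ)+1)) atTop (nhds 1) := by
      have : (fun n : ℕ => (α + ((n:ℝ)+1)) / ((n:ℝ)+1)) = fun n : ℕ => α / ((n:ℝ)+1) + 1 := by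
        funext n
        have : ((n:ℝ)+1) ≠ 0 := by positivity
        field_simp
      rw [this]
      have := (tendsto_const_nhds (x := α)).div_atTop
        (tendsto_atTop_add_const_right atTop 1 tendsto_natCast_atTop_atTop)
      simpa using this.add_const 1
    have hT := h1.mul_const r
    rw [one_mul] at hT
    exact Tendsto.congr (fun n => (key n).symm) hT

lemma summable_bc_real {α : ℝ} (hα : 0 < α) {r : ℝ} (hr0 : 0 ≤ r) (hr : r < 1) :
    Summable (fun n : ℕ => bc α n * r^n) := by
  rcases eq_or_lt_of_le hr0 with h | h
  · apply (summable_nat_add_iff 1).mp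
    apply summable_of_ne_finset_zero (s := ∅)
    intro n _
    simp [← h]
  · have aux := summable_deriv_aux hα h hr
    apply (summable_nat_add_iff 1).mp
    apply Summable.of_nonneg_of_le (fun n => by have := bc_pos hα (n+1); positivity)
      (fun n => ?_) (aux.mul_left r)
    have hb := bc_pos hα (n+1)
    have hn1 : (1:ℝ) ≤ (n:ℝ) + 1 := by push_cast; linarith [Nat.cast_nonneg (α := ℝ) n]
    rw [pow_succ]
    have h2 := mul_le_mul_of_nonneg_right (le_mul_of_one_le_left hb.le hn1)
      (by positivity : (0:ℝ) ≤ r^n * r)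
    calc bc α (n+1) * (r^n * r) ≤ ((n:ℝ)+1) * bc α (n+1) * (r^n * r) := by
          rw [mul_assoc] at h2 ⊢; exact h2
      _ = r * (((n:ℝ)+1) * bc α (n+1) * r^n) := by ring

lemma norm_bc_term (α : ℝ) (hα : 0 < α) (z : ℂ) (n : ℕ) :
    ‖(bc α n : ℂ) * z^n‖ = bc α n * (‖z‖)^n := by
  rw [norm_mul, norm_pow, Complex.norm_real, Real.norm_eq_abs,
    abs_of_pos (bc_pos hα n)]

lemma summable_bc_cpx {α : ℝ} (hα : 0 < α) {z : ℂ} (hz : ‖z‖ < 1) :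
    Summable (fun n : ℕ => (bc α n : ℂ) * z^n) := by
  apply Summable.of_norm
  have := summable_bc_real hα (norm_nonneg z) hz
  exact this.congr (fun n => (norm_bc_term α hα z n).symm)

lemma summable_u {α : ℝ} (hα : 0 < α) {r : ℝ} (hr0 : 0 < r) (hr : r < 1) :
    Summable (fun n : ℕ => (n:ℝ) * bc α n * r^(n-1)) := by
  apply (summable_nat_add_iff 1).mp
  exact (summable_deriv_aux hα hr0 hr).congr (fun n => by push_cast; ring_nf)

lemma summable_D {α : ℝ} (hα : 0 < α) {z : ℂ} (hz : ‖z‖ < 1) :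
    Summable (fun n : ℕ => (bc α n : ℂ) * ((n:ℂ) * z^(n-1))) := by
  set r' : ℝ := (‖z‖ + 1)/2 with hr'
  have h0 : 0 < r' := by have := norm_nonneg z; rw [hr']; linarith
  have h1 : r' < 1 := by rw [hr']; linarith
  have hzr : ‖z‖ ≤ r' := by rw [hr']; linarith
  apply Summable.of_norm
  apply Summable.of_nonneg_of_le (fun n => norm_nonneg _) (fun n => ?_) (summable_u hα h0 h1)
  have hb := bc_pos hα n
  rw [norm_mul, norm_mul, norm_pow, Complex.norm_real, Real.norm_eq_abs,
    Complex.norm_natCast, abs_of_pos hb]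
  have : ‖z‖ ^ (n-1) ≤ r' ^ (n-1) := pow_le_pow_left₀ (norm_nonneg z) hzr _
  have hn : (0:ℝ) ≤ (n:ℝ) := Nat.cast_nonneg n
  calc bc α n * ((n:ℝ) * ‖z‖ ^ (n-1)) ≤ bc α n * ((n:ℝ) * r' ^ (n-1)) := by
        apply mul_le_mul_of_nonneg_left (by apply mul_le_mul_of_nonneg_left this hn) hb.le
    _ = (n:ℝ) * bc α n * r'^(n-1) := by ring

noncomputable def gS (α : ℝ) (z : ℂ) : ℂ := ∑' n : ℕ, (bc α n : ℂ) * z ^ n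

lemma gS_hasDerivAt {α : ℝ} (hα : 0 < α) {z : ℂ} (hz : ‖z‖ < 1) :
    HasDerivAt (gS α) (∑' n : ℕ, (bc α n : ℂ) * ((n:ℂ) * z^(n-1))) z := by
  set r' : ℝ := (‖z‖ + 1)/2 with hr'
  have h0 : 0 < r' := by have := norm_nonneg z; rw [hr']; linarith
  have h1 : r' < 1 := by rw [hr']; linarith
  have hzr : ‖z‖ < r' := by rw [hr']; linarith
  apply hasDerivAt_tsum_of_isPreconnected (u := fun n : ℕ => (n:ℝ) * bc α n * r'^(n-1))
    (summable_u hα h0 h1) Metric.isOpen_ball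
    ((convex_ball (0:ℂ) r').isPreconnected)
    (g := fun n w => (bc α n : ℂ) * w ^ n)
    (g' := fun n w => (bc α n : ℂ) * ((n:ℂ) * w^(n-1)))
    (y₀ := 0)
  · intro n y _
    exact (hasDerivAt_pow n y).const_mul _
  · intro n y hy
    rw [Metric.mem_ball, Complex.dist_eq, sub_zero] at hy
    have hb := bc_pos hα n
    rw [norm_mul, norm_mul, norm_pow, Complex.norm_real, Real.norm_eq_abs,
      Complex.norm_natCast, abs_of_pos hb]
    have hle : ‖y‖ ^ (n-1) ≤ r' ^ (n-1) :=
      pow_le_pow_left₀ (norm_nonneg y) hy.le _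
    have hn : (0:ℝ) ≤ (n:ℝ) := Nat.cast_nonneg n
    calc bc α n * ((n:ℝ) * ‖y‖ ^ (n-1)) ≤ bc α n * ((n:ℝ) * r' ^ (n-1)) := by
          apply mul_le_mul_of_nonneg_left (by apply mul_le_mul_of_nonneg_left hle hn) hb.le
      _ = (n:ℝ) * bc α n * r'^(n-1) := by ring
  · rw [Metric.mem_ball, Complex.dist_eq, sub_zero]
    simpa using h0
  · apply summable_of_ne_finset_zero (s := {0})
    intro n hn
    simp only [Finset.mem_singleton] at hn
    simp [zero_pow hn]
  · rw [Metric.mem_ball, Complex.dist_eq, sub_zero]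
    exact hzr

lemma gS_ode {α : ℝ} (hα : 0 < α) {z : ℂ} (hz : ‖z‖ < 1) :
    (1 - z) * (∑' n : ℕ, (bc α n : ℂ) * ((n:ℂ) * z^(n-1))) = (α:ℂ) * gS α z := by
  set D : ℂ := ∑' n : ℕ, (bc α n : ℂ) * ((n:ℂ) * z^(n-1)) with hD
  have hsD := summable_D hα hz
  -- shifted form of D
  have hshift : D = ∑' n : ℕ, (bc α (n+1) : ℂ) * (((n:ℂ)+1) * z^n) := by
    rw [hD, Summable.tsum_eq_zero_add hsD]
    simp only [Nat.cast_zero, zero_mul, mul_zero, zero_add]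
    apply tsum_congr
    intro n
    push_cast
    norm_num
  -- z * D
  have hzD : z * D = ∑' n : ℕ, (bc α n : ℂ) * ((n:ℂ) * z^n) := by
    rw [hD, ← tsum_mul_left]
    apply tsum_congr
    intro n
    cases n with
    | zero => simp
    | succ m => simp only [Nat.add_sub_cancel]; push_cast; ring
  have hs1 : Summable (fun n : ℕ => (bc α (n+1) : ℂ) * (((n:ℂ)+1) * z^n)) := by
    apply ((summable_nat_add_iff 1).mpr hsD).congr
    intro n; push_cast; norm_num
  have hs2 : Summable (fun n : ℕ => (bc α n : ℂ) * ((n:ℂ) * z^n)) := by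
    apply (hsD.mul_left z).congr
    intro n
    cases n with
    | zero => simp
    | succ m => simp only [Nat.add_sub_cancel]; push_cast; ring
  have key : D - z * D = (α:ℂ) * gS α z := by
    rw [hzD, hshift, ← Summable.tsum_sub hs1 hs2, gS, ← tsum_mul_left]
    apply tsum_congr
    intro n
    have hrec : ((bc α (n+1) : ℝ) * ((n:ℝ)+1) : ℝ) = bc α n * (α + n) := by
      have := bc_succ α n; push_cast at this ⊢; linarith
    have hrecC : (bc α (n+1) : ℂ) * (((n:ℂ)+1)) = (bc α n : ℂ) * ((α:ℂ) + (n:ℂ)) := by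
      have := congrArg (Complex.ofReal) hrec
      push_cast at this
      convert this using 2 <;> push_cast <;> ring
    calc (bc α (n+1) : ℂ) * (((n:ℂ)+1) * z^n) - (bc α n : ℂ) * ((n:ℂ) * z^n)
        = ((bc α (n+1) : ℂ) * (((n:ℂ)+1)) - (bc α n : ℂ) * (n:ℂ)) * z^n := by ring
      _ = (α:ℂ) * ((bc α n : ℂ) * z^n) := by rw [hrecC]; ring
  rw [← key]; ring

lemma gS_eq_one {α : ℝ} (hα : 0 < α) {z : ℂ} (hz : ‖z‖ < 1) :
    (1 - z) ^ (α:ℂ) * gS α z = 1 := by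
  set H : ℂ → ℂ := fun w => (1 - w) ^ (α:ℂ) * gS α w with hHdef
  have hderiv : ∀ w ∈ Metric.ball (0:ℂ) 1, HasDerivAt H 0 w := by
    intro w hw
    rw [Metric.mem_ball, Complex.dist_eq, sub_zero] at hw
    have hre : w.re < 1 := lt_of_le_of_lt (Complex.re_le_norm w) hw
    have hslit : (1 - w) ∈ Complex.slitPlane := by
      rw [Complex.mem_slitPlane_iff]
      left
      simp [Complex.sub_re]
      linarith
    have hne : (1 : ℂ) - w ≠ 0 := Complex.slitPlane_ne_zero hslit
    have h1 : HasDerivAt (fun x : ℂ => 1 - x) (-1) w := (hasDerivAt_id w).const_sub 1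
    have h2 : HasDerivAt (fun x : ℂ => (1 - x) ^ (α:ℂ))
        ((α:ℂ) * (1 - w) ^ ((α:ℂ) - 1) * (-1)) w := h1.cpow_const hslit
    have h3 := gS_hasDerivAt hα hw
    have h4 := h2.mul h3
    have hval : (α:ℂ) * (1 - w) ^ ((α:ℂ) - 1) * (-1) * gS α w
        + (1 - w) ^ (α:ℂ) * (∑' n : ℕ, (bc α n : ℂ) * ((n:ℂ) * w^(n-1))) = 0 := by
      have e : (1 - w) ^ (α:ℂ) = (1 - w) ^ ((α:ℂ) - 1) * (1 - w) := by
        have e2 : (1 - w) ^ (((α:ℂ) - 1) + 1) = (1 - w) ^ ((α:ℂ) - 1) * (1 - w) ^ (1:ℂ) :=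
          Complex.cpow_add _ _ hne
        rw [Complex.cpow_one, sub_add_cancel] at e2
        exact e2
      rw [e]
      have ode := gS_ode hα hw
      linear_combination (1 - w) ^ ((α:ℂ) - 1) * ode
    rw [hval] at h4
    exact h4
  have hconst : H z = H 0 := by
    apply (convex_ball (0:ℂ) 1).is_const_of_fderivWithin_eq_zero
      (f := H) (𝕜 := ℂ)
    · intro x hx
      exact (hderiv x hx).differentiableAt.differentiableWithinAt
    · intro x hx
      rw [fderivWithin_of_isOpen Metric.isOpen_ball hx]
      rw [(hderiv x hx).hasFDerivAt.fderiv]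
      ext y
      simp
    · rw [Metric.mem_ball, Complex.dist_eq, sub_zero]; exact hz
    · exact Metric.mem_ball_self one_pos
  have hgS0 : gS α 0 = 1 := by
    rw [gS, tsum_eq_single 0 (fun n hn => by simp [zero_pow hn])]
    simp [bc]
  have hH0 : H 0 = 1 := by
    rw [hHdef]
    simp only [sub_zero, Complex.one_cpow, one_mul, hgS0]
  show H z = 1
  rw [hconst, hH0]

lemma tsum_bc_rpow {α : ℝ} (hα : 0 < α) {r : ℝ} (h0 : 0 ≤ r) (h1 : r < 1) :
    ∑' n : ℕ, bc α n * r^n = (1 - r) ^ (-α) := by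
  have habs : ‖(r : ℂ)‖ < 1 := by rwa [Complex.norm_real, Real.norm_eq_abs, _root_.abs_of_nonneg h0]
  have hc := gS_eq_one hα habs
  have h1r : (0:ℝ) < 1 - r := by linarith
  have hgr : gS α (r:ℂ) = ((∑' n : ℕ, bc α n * r^n : ℝ) : ℂ) := by
    rw [gS, Complex.ofReal_tsum]
    push_cast
    rfl
  rw [hgr] at hc
  have hco : ((1:ℂ) - (r:ℂ)) = (((1 - r : ℝ)) : ℂ) := by push_cast; ring
  rw [hco, ← Complex.ofReal_cpow h1r.le] at hc
  have : ((1 - r : ℝ)^α) * (∑' n : ℕ, bc α n * r^n) = 1 := by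
    exact_mod_cast hc
  have hpow : (0:ℝ) < (1 - r)^α := Real.rpow_pos_of_pos h1r α
  rw [Real.rpow_neg h1r.le]
  field_simp at this ⊢
  linarith

lemma bc_prod (α : ℝ) (hα : 0 < α) (n : ℕ) :
    ∏ j ∈ Finset.range (n+1), (α + j) = bc α (n+1) * (Nat.factorial (n+1)) := by
  induction n with
  | zero => simp [bc]
  | succ n ih =>
      rw [Finset.prod_range_succ, ih]
      have hfac : (Nat.factorial (n+2) : ℝ) = ((n:ℝ)+2) * Nat.factorial (n+1) := by
        rw [Nat.factorial_succ]; push_cast; ring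
      have hrec : bc α (n+2) * ((n:ℝ)+2) = bc α (n+1) * (α + (n+1)) := by
        have := bc_succ α (n+1); push_cast at this ⊢; linarith
      rw [hfac]
      push_cast
      nlinarith [hrec, (Nat.cast_pos (α := ℝ)).mpr (Nat.factorial_pos (n+1))]

lemma bc_tendsto {α : ℝ} (hα : 0 < α) :
    Tendsto (fun n : ℕ => bc α n * Real.Gamma α * (n:ℝ)^((1:ℝ)-α)) atTop (nhds 1) := by
  have hΓ : 0 < Real.Gamma α := Real.Gamma_pos_of_pos hα
  set T : ℕ → ℝ := fun n => Real.Gamma α * ((n:ℝ)/((n:ℝ)+1))^α / Real.GammaSeq α n with hT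
  have hTlim : Tendsto T atTop (nhds 1) := by
    have hfrac : Tendsto (fun n : ℕ => (n:ℝ)/((n:ℝ)+1)) atTop (nhds 1) := by
      simpa using tendsto_natCast_div_add_atTop (1:ℝ)
    have hrpow : Tendsto (fun n : ℕ => ((n:ℝ)/((n:ℝ)+1))^α) atTop (nhds 1) := by
      have hc := (Real.continuousAt_rpow_const 1 α (Or.inl one_ne_zero)).tendsto
      have := hc.comp hfrac
      simpa [Real.one_rpow, Function.comp_def] using this
    have h2 := Tendsto.div ((tendsto_const_nhds (x := Real.Gamma α)).mul hrpow)
      (Real.GammaSeq_tendsto_Gamma α) hΓ.ne'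
    rw [mul_one, div_self hΓ.ne'] at h2
    exact h2
  have hev : ∀ᶠ n in atTop, bc α (n+1) * Real.Gamma α * (((n:ℝ)+1))^((1:ℝ)-α) = T n := by
    filter_upwards [eventually_ge_atTop 1] with n hn
    have hN : (0:ℝ) < (n:ℝ) := by exact_mod_cast hn
    have hM : (0:ℝ) < (n:ℝ) + 1 := by linarith
    have hb := bc_pos hα (n+1)
    have hGSeq : Real.GammaSeq α n = (n:ℝ)^α / (bc α (n+1) * ((n:ℝ)+1)) := by
      rw [Real.GammaSeq, bc_prod α hα n, Nat.factorial_succ]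
      push_cast
      have h1 : (0:ℝ) < (Nat.factorial n : ℝ) := by exact_mod_cast Nat.factorial_pos n
      field_simp
    have hdiv : ((n:ℝ)/((n:ℝ)+1))^α = (n:ℝ)^α / ((n:ℝ)+1)^α :=
      Real.div_rpow hN.le hM.le α
    have hM1 : ((n:ℝ)+1)^((1:ℝ)-α) * ((n:ℝ)+1)^α = (n:ℝ)+1 := by
      rw [← Real.rpow_add hM]
      norm_num
    have hNα : (0:ℝ) < (n:ℝ)^α := Real.rpow_pos_of_pos hN α
    have hMα : (0:ℝ) < ((n:ℝ)+1)^α := Real.rpow_pos_of_pos hM α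
    have hM2 : ((n:ℝ)+1)^((1:ℝ)-α) = ((n:ℝ)+1) / ((n:ℝ)+1)^α := by
      rw [eq_div_iff hMα.ne']; exact hM1
    rw [hT]
    simp only
    rw [hGSeq, hdiv, hM2]
    field_simp
  have hshift := Tendsto.congr' (EventuallyEq.symm hev) hTlim
  apply (tendsto_add_atTop_iff_nat 1).mp
  exact hshift.congr (fun n => by push_cast; ring)

lemma stolz_bound {φ : ℝ} (hφ1 : Real.pi/2 < φ) (hφ2 : φ < Real.pi) {z : ℂ}
    (hz1 : ‖z‖ < 1) (hz2 : φ < |Complex.arg (z-1)|)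
    (hz3 : ‖z-1‖ ≤ -Real.cos φ) :
    ‖1 - z‖ ≤ (2 / (-Real.cos φ)) * (1 - ‖z‖) := by
  set κ := -Real.cos φ with hκdef
  have hκ : 0 < κ := by
    rw [hκdef, neg_pos]
    exact Real.cos_neg_of_pi_div_two_lt_of_lt hφ1 (by linarith [Real.pi_pos])
  have hκ1 : κ ≤ 1 := by
    rw [hκdef]
    linarith [Real.neg_one_le_cos φ]
  set r := ‖z - 1‖ with hrdef
  have hzne : z - 1 ≠ 0 := by
    intro hc
    have : z = 1 := by linear_combination hc
    rw [this] at hz1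
    simp at hz1
  have hr0 : 0 < r := by
    rw [hrdef]
    exact norm_pos_iff.mpr hzne
  have hre : (z - 1).re = r * Real.cos (Complex.arg (z - 1)) := by
    rw [Complex.cos_arg hzne, hrdef]
    field_simp
  have hcos : Real.cos (Complex.arg (z - 1)) ≤ Real.cos φ := by
    rw [← Real.cos_abs]
    exact Real.cos_le_cos_of_nonneg_of_le_pi (by linarith [Real.pi_pos]) 
      (Complex.abs_arg_le_pi _) hz2.le
  have hsq : (‖z‖)^2 = 1 + 2*(z-1).re + r^2 := by
    rw [Complex.sq_norm, hrdef, Complex.sq_norm]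
    simp [Complex.normSq_apply, Complex.sub_re, Complex.sub_im]
    ring
  have hre2 : (z-1).re ≤ -(r * κ) := by
    rw [hre, hκdef]
    have := mul_le_mul_of_nonneg_left hcos hr0.le
    linarith
  have hub : (‖z‖)^2 ≤ 1 - r * κ := by
    have hrκ : r^2 ≤ r * κ := by nlinarith
    nlinarith
  have habs : ‖z‖ ≤ Real.sqrt (1 - r * κ) := by
    rw [← Real.sqrt_sq (norm_nonneg z)]
    exact Real.sqrt_le_sqrt hub
  have hrκ1 : r * κ ≤ 1 := by nlinarith
  have hsqrt : Real.sqrt (1 - r * κ) ≤ 1 - r * κ / 2 := by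
    rw [show (1 - r * κ / 2) = Real.sqrt ((1 - r * κ / 2)^2) from
      (Real.sqrt_sq (by nlinarith)).symm]
    apply Real.sqrt_le_sqrt
    have hexp : (1 - r * κ / 2)^2 - (1 - r * κ) = (r * κ / 2)^2 := by ring
    linarith [sq_nonneg (r * κ / 2), hexp]
  have hfin : r * κ / 2 ≤ 1 - ‖z‖ := by
    have := habs.trans hsqrt
    linarith
  have h1z : ‖1 - z‖ = r := by
    rw [hrdef, ← norm_neg (z - 1)]
    congr 1
    ring
  rw [h1z, div_mul_eq_mul_div, le_div_iff₀ hκ]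
  nlinarith

/-- If `h_n ≥ 0` and `h_n ~ n^{α−1}/Γ(α)`, then `f(z) = Σ h_n z^n` satisfies
`(1−z)^α f(z) → 1` as `z → 1` inside any domain `D_{1,φ} = {|z| < 1, |arg(z−1)| > φ}`
with `φ ∈ (π/2, π)`. -/
theorem tauberian_in_domain (α : ℝ) (hα : 0 < α) (h : ℕ → ℝ) (hpos : ∀ n, 0 ≤ h n)
    (hasymp : Tendsto (fun n : ℕ => h n * Real.Gamma α * (n : ℝ) ^ ((1 : ℝ) - α))
      atTop (nhds 1)) :
    ∀ φ : ℝ, φ ∈ Set.Ioo (Real.pi / 2) Real.pi →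
      Tendsto (fun z : ℂ => (1 - z) ^ (α : ℂ) * ∑' n : ℕ, (h n : ℂ) * z ^ n)
        (nhdsWithin 1 {z : ℂ | ‖z‖ < 1 ∧ φ < |Complex.arg (z - 1)|})
        (nhds 1) := by
  intro φ hφ
  obtain ⟨hφ1, hφ2⟩ := hφ
  set L := nhdsWithin (1:ℂ) {z : ℂ | ‖z‖ < 1 ∧ φ < |Complex.arg (z - 1)|} with hL
  set κ := -Real.cos φ with hκdef
  have hκ : 0 < κ := by
    rw [hκdef, neg_pos]
    exact Real.cos_neg_of_pi_div_two_lt_of_lt hφ1 (by linarith [Real.pi_pos])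
  set M : ℝ := 2/κ with hMdef
  have hM : 0 < M := by positivity
  set Mα : ℝ := M ^ α with hMαdef
  have hMα : 0 < Mα := Real.rpow_pos_of_pos hM α
  -- coefficient comparison claim
  have hclaim : ∀ ε'' : ℝ, 0 < ε'' → ∀ᶠ n in atTop, |h n - bc α n| ≤ ε'' * bc α n := by
    intro ε'' hε''
    have hbT := bc_tendsto hα
    have hq : Tendsto (fun n : ℕ => h n / bc α n) atTop (nhds 1) := by
      have hd := Tendsto.div hasymp hbT one_ne_zero
      norm_num at hd
      apply hd.congr'
      filter_upwards [eventually_ge_atTop 1] with n hn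
      have hnp : (0:ℝ) < (n:ℝ) := by exact_mod_cast hn
      have hb := bc_pos hα n
      have hr := Real.rpow_pos_of_pos hnp ((1:ℝ)-α)
      have hΓ := Real.Gamma_pos_of_pos hα
      rw [Pi.div_apply]
      field_simp
    have h0 : Tendsto (fun n : ℕ => h n / bc α n - 1) atTop (nhds 0) := by
      simpa using hq.sub_const 1
    filter_upwards [(Metric.tendsto_nhds.mp h0) ε'' hε''] with n hd
    rw [Real.dist_eq, sub_zero] at hd
    have hb := bc_pos hα n
    have heq : h n - bc α n = bc α n * (h n / bc α n - 1) := by field_simp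
    rw [heq, abs_mul, _root_.abs_of_pos hb]
    nlinarith [hd.le, hb]
  rw [Metric.tendsto_nhds]
  intro ε hε
  set ε' : ℝ := ε / (2 * Mα) with hε'def
  have hε' : 0 < ε' := by positivity
  obtain ⟨N, hN⟩ := eventually_atTop.mp (hclaim ε' hε')
  set C : ℝ := ∑ n ∈ Finset.range N, |h n - bc α n| with hCdef
  have hC0 : 0 ≤ C := Finset.sum_nonneg fun n _ => abs_nonneg _
  -- eventual facts
  have hmem : ∀ᶠ z in L, ‖z‖ < 1 ∧ φ < |Complex.arg (z - 1)| :=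
    self_mem_nhdsWithin
  have hclose : ∀ᶠ z in L, ‖z - 1‖ ≤ κ := by
    have h1 : ∀ᶠ z in nhds (1:ℂ), ‖z-1‖ ≤ κ := by
      filter_upwards [Metric.closedBall_mem_nhds (1:ℂ) hκ] with w hw
      rwa [Metric.mem_closedBall, Complex.dist_eq] at hw
    exact h1.filter_mono nhdsWithin_le_nhds
  have hsmall : ∀ᶠ z in L, (‖1-z‖)^α * C < ε/2 := by
    have t1 : Tendsto (fun z : ℂ => ‖1-z‖) (nhds 1) (nhds 0) := by
      have hcont : Continuous fun z : ℂ => ‖1-z‖ :=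
        continuous_norm.comp (continuous_const.sub continuous_id)
      have := hcont.tendsto 1
      simpa using this
    have t2 : Tendsto (fun z : ℂ => ‖1-z‖) L (nhds 0) :=
      t1.mono_left nhdsWithin_le_nhds
    have t3 : Tendsto (fun z : ℂ => (‖1-z‖)^α) L (nhds 0) := by
      have hc := (Real.continuousAt_rpow_const 0 α (Or.inr hα.le)).tendsto
      have := hc.comp t2
      simpa [Real.zero_rpow hα.ne', Function.comp_def] using this
    have t4 := t3.mul_const C
    rw [zero_mul] at t4
    exact t4.eventually_lt_const (by positivity)
  filter_upwards [hmem, hclose, hsmall] with z hzS hzcl hzsm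
  obtain ⟨hzabs, hzarg⟩ := hzS
  set ρ := ‖z‖ with hρdef
  have hρ0 : (0:ℝ) ≤ ρ := norm_nonneg z
  have hρ1 : ρ < 1 := hzabs
  have h1ρ : (0:ℝ) < 1 - ρ := by linarith
  have hstolz : ‖1 - z‖ ≤ M * (1 - ρ) :=
    stolz_bound hφ1 hφ2 hzabs hzarg hzcl
  -- summability
  have hSbcC := summable_bc_cpx hα hzabs
  have hSbcR := summable_bc_real hα hρ0 hρ1
  have hShR : Summable (fun n : ℕ => h n * ρ^n) := by
    apply (summable_nat_add_iff N).mp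
    apply Summable.of_nonneg_of_le (fun n => by have := hpos (n+N); positivity)
      (fun n => ?_) (((summable_nat_add_iff N).mpr hSbcR).mul_left (1+ε'))
    have hb := hN (n+N) (Nat.le_add_left N n)
    have hbp := bc_pos hα (n+N)
    have hup : h (n+N) ≤ (1+ε') * bc α (n+N) := by
      have := abs_le.mp hb
      nlinarith [this.2]
    have hρn : (0:ℝ) ≤ ρ^(n+N) := by positivity
    calc h (n+N) * ρ^(n+N) ≤ ((1+ε') * bc α (n+N)) * ρ^(n+N) :=
          mul_le_mul_of_nonneg_right hup hρn
      _ = (1+ε') * (bc α (n+N) * ρ^(n+N)) := by ring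
  have hShC : Summable (fun n : ℕ => (h n : ℂ) * z^n) := by
    apply Summable.of_norm
    apply hShR.congr
    intro n
    rw [norm_mul, norm_pow, Complex.norm_real, Real.norm_eq_abs,
      _root_.abs_of_nonneg (hpos n)]
  have hSdR : Summable (fun n : ℕ => |h n - bc α n| * ρ^n) := by
    apply Summable.of_nonneg_of_le (fun n => by positivity) (fun n => ?_) (hShR.add hSbcR)
    have hρn : (0:ℝ) ≤ ρ^n := by positivity
    have habs : |h n - bc α n| ≤ h n + bc α n := by
      calc |h n - bc α n| ≤ |h n| + |bc α n| := abs_sub _ _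
        _ = h n + bc α n := by
            rw [_root_.abs_of_nonneg (hpos n), _root_.abs_of_pos (bc_pos hα n)]
    calc |h n - bc α n| * ρ^n ≤ (h n + bc α n) * ρ^n := mul_le_mul_of_nonneg_right habs hρn
      _ = h n * ρ^n + bc α n * ρ^n := by ring
  -- the key identity and bounds
  have hkey : (1 - z) ^ (α:ℂ) * gS α z = 1 := gS_eq_one hα hzabs
  have hdiff : (∑' n : ℕ, (h n : ℂ) * z^n) - gS α z
      = ∑' n : ℕ, ((h n - bc α n : ℝ) : ℂ) * z^n := by
    rw [gS, ← Summable.tsum_sub hShC hSbcC]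
    exact tsum_congr fun n => by push_cast; ring
  have hb1 : ‖(∑' n : ℕ, (h n : ℂ) * z^n) - gS α z‖
      ≤ ∑' n : ℕ, |h n - bc α n| * ρ^n := by
    rw [hdiff]
    have hnorm : ∀ n : ℕ, ‖((h n - bc α n : ℝ) : ℂ) * z^n‖ = |h n - bc α n| * ρ^n := by
      intro n
      rw [norm_mul, norm_pow, Complex.norm_real, Real.norm_eq_abs]
    calc ‖∑' n : ℕ, ((h n - bc α n : ℝ) : ℂ) * z^n‖
        ≤ ∑' n : ℕ, ‖((h n - bc α n : ℝ) : ℂ) * z^n‖ :=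
          norm_tsum_le_tsum_norm (hSdR.congr fun n => (hnorm n).symm)
      _ = ∑' n : ℕ, |h n - bc α n| * ρ^n := tsum_congr hnorm
  have hb2 : ∑' n : ℕ, |h n - bc α n| * ρ^n ≤ C + ε' * (1-ρ)^(-α) := by
    have hsum_if : Summable (fun n : ℕ => if n < N then |h n - bc α n| else 0) :=
      summable_of_ne_finset_zero (s := Finset.range N)
        (fun n hn => if_neg (fun hc => hn (Finset.mem_range.mpr hc)))
    have hsum_eps : Summable (fun n : ℕ => ε' * (bc α n * ρ^n)) := hSbcR.mul_left ε'
    have hbnd : ∀ n : ℕ, |h n - bc α n| * ρ^n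
        ≤ (if n < N then |h n - bc α n| else 0) + ε' * (bc α n * ρ^n) := by
      intro n
      have hbp := bc_pos hα n
      have hρn : (0:ℝ) ≤ ρ^n := by positivity
      by_cases hn : n < N
      · rw [if_pos hn]
        have h1 : |h n - bc α n| * ρ^n ≤ |h n - bc α n| := by
          have hle : ρ^n ≤ 1 := pow_le_one₀ hρ0 hρ1.le
          nlinarith [abs_nonneg (h n - bc α n)]
        have h2 : (0:ℝ) ≤ ε' * (bc α n * ρ^n) := by positivity
        linarith
      · rw [if_neg hn]
        push_neg at hn
        have := hN n hn
        calc |h n - bc α n| * ρ^n ≤ (ε' * bc α n) * ρ^n :=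
              mul_le_mul_of_nonneg_right this hρn
          _ = 0 + ε' * (bc α n * ρ^n) := by ring
    have hle := Summable.tsum_le_tsum hbnd hSdR (hsum_if.add hsum_eps)
    rw [Summable.tsum_add hsum_if hsum_eps, tsum_mul_left, tsum_bc_rpow hα hρ0 hρ1] at hle
    have hif : ∑' n : ℕ, (if n < N then |h n - bc α n| else 0) = C := by
      rw [tsum_eq_sum (s := Finset.range N)
        (fun n hn => if_neg (fun hc => hn (Finset.mem_range.mpr hc)))]
      exact Finset.sum_congr rfl fun n hn => if_pos (Finset.mem_range.mp hn)
    rwa [hif] at hle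
  -- final estimate
  have habs_cpow : ‖(1-z) ^ (α:ℂ)‖ = (‖1-z‖)^α :=
    Complex.norm_cpow_real _ _
  have hq : (‖1-z‖)^α * (1-ρ)^(-α) ≤ Mα := by
    have h6 : (‖1-z‖)^α ≤ Mα * (1-ρ)^α := by
      calc (‖1-z‖)^α ≤ (M * (1-ρ))^α :=
            Real.rpow_le_rpow (norm_nonneg _) hstolz hα.le
        _ = Mα * (1-ρ)^α := Real.mul_rpow hM.le h1ρ.le
    have h7 : (1-ρ)^α * (1-ρ)^(-α) = 1 := by
      rw [← Real.rpow_add h1ρ]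
      norm_num
    have h8 : (0:ℝ) ≤ (1-ρ)^(-α) := Real.rpow_nonneg h1ρ.le _
    calc (‖1-z‖)^α * (1-ρ)^(-α) ≤ (Mα * (1-ρ)^α) * (1-ρ)^(-α) :=
          mul_le_mul_of_nonneg_right h6 h8
      _ = Mα * ((1-ρ)^α * (1-ρ)^(-α)) := by ring
      _ = Mα := by rw [h7, mul_one]
  have hrnn : (0:ℝ) ≤ (‖1-z‖)^α := Real.rpow_nonneg (norm_nonneg _) α
  rw [Complex.dist_eq]
  have hFdiff : (1-z) ^ (α:ℂ) * (∑' n : ℕ, (h n : ℂ) * z^n) - 1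
      = (1-z) ^ (α:ℂ) * ((∑' n : ℕ, (h n : ℂ) * z^n) - gS α z) := by
    rw [mul_sub, hkey]
  calc ‖(1-z) ^ (α:ℂ) * (∑' n : ℕ, (h n : ℂ) * z^n) - 1‖
      = (‖1-z‖)^α * ‖(∑' n : ℕ, (h n : ℂ) * z^n) - gS α z‖ := by
        rw [hFdiff, norm_mul, habs_cpow]
    _ ≤ (‖1-z‖)^α * (C + ε' * (1-ρ)^(-α)) :=
        mul_le_mul_of_nonneg_left (hb1.trans hb2) hrnn
    _ = (‖1-z‖)^α * C + ε' * ((‖1-z‖)^α * (1-ρ)^(-α)) := by ring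
    _ < ε/2 + ε' * Mα := by
        have h9 : ε' * ((‖1-z‖)^α * (1-ρ)^(-α)) ≤ ε' * Mα :=
          mul_le_mul_of_nonneg_left hq hε'.le
        linarith
    _ = ε := by
        rw [hε'def]
        field_simp
        ring
end

section
/- Let G be a finite connected bipartite simple graph with graph distance dist, let x_1, …, x_k be vertices of G and d_1, …, d_k integers such that dist(x_i, x_j) + d_i − d_j is even for all i, j. Then the function ℓ(x) := min_{1 ≤ i ≤ k} (d_i + dist(x, x_i)) satisfies |ℓ(x) − ℓ(y)| = 1 for every pair of adjacent vertices x, y of G. -/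
private lemma walk_parity {V : Type*} {G : SimpleGraph V} (c : V → Bool)
    (hc : ∀ u v : V, G.Adj u v → c u ≠ c v) {a b : V} (p : G.Walk a b) :
    ((p.length : ZMod 2)) = (if c a then 1 else 0) - (if c b then 1 else 0) := by
  induction p with
  | nil => simp
  | cons h p ih =>
    rename_i u v w
    have hne := hc u v h
    have htwo2 : (2 : ZMod 2) = 0 := by decide
    simp only [SimpleGraph.Walk.length_cons, Nat.cast_add, Nat.cast_one, ih]
    rcases Bool.eq_false_or_eq_true (c u) with h1 | h1 <;>
      rcases Bool.eq_false_or_eq_true (c v) with h2 | h2 <;>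
      simp [h1, h2] at hne ⊢ <;>
      first
      | linear_combination (0 : ZMod 2) * htwo2
      | linear_combination htwo2
      | (rcases Bool.eq_false_or_eq_true (c w) with h3 | h3 <;> simp only [h3] <;> decide)

/-- In a finite connected bipartite simple graph, if `x_0, …, x_k` are vertices and
`d_0, …, d_k` integers such that `dist(x_i,x_j) + d_i − d_j` is even for all `i, j`,
then `ℓ(x) = min_i (d_i + dist(x, x_i))` changes by exactly `1` along every edge. -/
theorem label_changes_by_one {V : Type*} [Fintype V] (G : SimpleGraph V)
    (hconn : G.Connected)
    (hbip : ∃ c : V → Bool, ∀ u v : V, G.Adj u v → c u ≠ c v)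
    (k : ℕ) (x : Fin (k + 1) → V) (d : Fin (k + 1) → ℤ)
    (hpar : ∀ i j, Even ((G.dist (x i) (x j) : ℤ) + d i - d j)) :
    ∀ u v : V, G.Adj u v →
      |(Finset.univ.inf' Finset.univ_nonempty fun i => d i + (G.dist u (x i) : ℤ)) -
        (Finset.univ.inf' Finset.univ_nonempty fun i => d i + (G.dist v (x i) : ℤ))| = 1 := by
  obtain ⟨c, hc⟩ := hbip
  set f : V → ZMod 2 := fun v => if c v then 1 else 0 with hf
  have hdist : ∀ a b : V, (((G.dist a b : ℤ) : ZMod 2)) = f a - f b := by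
    intro a b
    obtain ⟨p, hp⟩ := hconn.exists_walk_length_eq_dist a b
    push_cast
    rw [← hp]
    exact walk_parity c hc p
  intro u v huv
  set ℓu := Finset.univ.inf' Finset.univ_nonempty fun i => d i + (G.dist u (x i) : ℤ) with hℓu
  set ℓv := Finset.univ.inf' Finset.univ_nonempty fun i => d i + (G.dist v (x i) : ℤ) with hℓv
  have hduv : G.dist u v = 1 := SimpleGraph.dist_eq_one_iff_adj.mpr huv
  -- Lipschitz
  have hle : ∀ (a b : V), G.dist a b = 1 →
      (Finset.univ.inf' Finset.univ_nonempty fun i => d i + (G.dist a (x i) : ℤ)) ≤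
      (Finset.univ.inf' Finset.univ_nonempty fun i => d i + (G.dist b (x i) : ℤ)) + 1 := by
    intro a b hab
    obtain ⟨j, -, hj⟩ := Finset.exists_mem_eq_inf' (Finset.univ_nonempty (α := Fin (k+1)))
      (fun i => d i + (G.dist b (x i) : ℤ))
    rw [hj]
    refine le_trans (Finset.inf'_le _ (Finset.mem_univ j)) ?_
    have htri : G.dist a (x j) ≤ G.dist a b + G.dist b (x j) := hconn.dist_triangle
    rw [hab] at htri
    have : (G.dist a (x j) : ℤ) ≤ 1 + (G.dist b (x j) : ℤ) := by exact_mod_cast htri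
    linarith
  have h1 : ℓu ≤ ℓv + 1 := hle u v hduv
  have h2 : ℓv ≤ ℓu + 1 := hle v u (by rwa [SimpleGraph.dist_comm])
  -- parity
  obtain ⟨iu, -, hiu⟩ := Finset.exists_mem_eq_inf' (Finset.univ_nonempty (α := Fin (k+1)))
    (fun i => d i + (G.dist u (x i) : ℤ))
  obtain ⟨iv, -, hiv⟩ := Finset.exists_mem_eq_inf' (Finset.univ_nonempty (α := Fin (k+1)))
    (fun i => d i + (G.dist v (x i) : ℤ))
  have hfuv : f u - f v = 1 := by
    have hne := hc u v huv
    rcases Bool.eq_false_or_eq_true (c u) with h1 | h1 <;>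
      rcases Bool.eq_false_or_eq_true (c v) with h2 | h2 <;>
      simp [hf, h1, h2] at hne ⊢ <;> decide
  have hp : ((G.dist (x iu) (x iv) : ZMod 2)) + (d iu : ZMod 2) - (d iv : ZMod 2) = 0 := by
    have h0 := (ZMod.intCast_zmod_eq_zero_iff_dvd _ 2).mpr (hpar iu iv).two_dvd
    push_cast at h0
    exact h0
  have hdi : (G.dist (x iu) (x iv) : ZMod 2) = f (x iu) - f (x iv) := by
    have := hdist (x iu) (x iv); push_cast at this; exact this
  have hdu : (G.dist u (x iu) : ZMod 2) = f u - f (x iu) := by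
    have := hdist u (x iu); push_cast at this; exact this
  have hdv : (G.dist v (x iv) : ZMod 2) = f v - f (x iv) := by
    have := hdist v (x iv); push_cast at this; exact this
  have htwo : (2 : ZMod 2) = 0 := by decide
  have hcast : ((ℓu - ℓv : ℤ) : ZMod 2) = 1 := by
    rw [hℓu, hℓv, hiu, hiv]
    push_cast
    rw [hdu, hdv]
    linear_combination hp - hdi + hfuv + (f (x iv) - f (x iu)) * htwo
  have hnd : ¬ (2:ℤ) ∣ (ℓu - ℓv) := by
    intro hdvd
    rw [(ZMod.intCast_zmod_eq_zero_iff_dvd _ 2).mpr hdvd] at hcast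
    exact one_ne_zero hcast.symm
  rw [abs_eq (by norm_num : (0:ℤ) ≤ 1)]
  omega
end
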